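/- Consider the repeated game setting: $X$ is drawn from $P = Q^{\otimes n}$ over $\mathcal{X}^{\otimes n}$, $E = E^1 \times \dots \times E^k \subseteq \mathcal{X}^{\otimes n}$ is a product event with $\alpha := \Pr[E] > 0$. Let $i \in [n]$, and let $\mathcal{R}_i$ be any $(m, \epsilon)$-generalized random restriction acting only on coordinates $[n] \setminus \{i\}$, with $\epsilon < \alpha$, and suppose $\mathbb{E}_{\rho \sim \mathcal{R}_i | E} \| P_{X_i | E, E_\rho} - Q \|_1 \ge \beta$ for some $\beta \in (0,1]$. Let $\mathcal{R}$ be the generalized random restriction on $\mathcal{X}^{\otimes n}$ obtained by sampling $\rho \sim \mathcal{R}_i$, $\tilde{x} \sim Q$, and additionally fixing coordinate $i$ to $\tilde{x}$. Then $\mathcal{R}$ is an $(m, \epsilon)$-generalized random restriction on $\mathcal{X}^{\otimes n}$, and $\mathbb{E}_{\rho' \sim \mathcal{R}}[\Pr[E | E_{\rho'}]^2] \ge \alpha^2 (1 + \beta^2 - 6\epsilon/\alpha)$. -/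

import Mathlib

/-- A generalized restriction `ρ = (T₁, …, T_m, I, z)` on `Σ^n`. -/
structure GenRestr (Sig : Type*) (n : ℕ) where
  m : ℕ
  T : Fin m → Finset (Fin n)
  I : Finset (Fin n)
  z : Fin n → Sig
  hT : ∀ j, (T j).Nonempty
  hdisj : ∀ j j', j ≠ j' → Disjoint (T j) (T j')
  hdisjI : ∀ j, Disjoint (T j) I
  hcover : ∀ i : Fin n, i ∈ I ∨ ∃ j, i ∈ T j

/-- The event `E_ρ ⊆ Σ^n` of a generalized restriction. -/
def GenRestr.event {Sig : Type*} {n : ℕ} (ρ : GenRestr Sig n) : Set (Fin n → Sig) :=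
  {x | (∀ j, ∀ i ∈ ρ.T j, ∀ i' ∈ ρ.T j, x i = x i') ∧ ∀ i ∈ ρ.I, x i = ρ.z i}

open Classical in
/-- The probability of `A ⊆ Σ^n` under the product measure `μ^{⊗n}`. -/
noncomputable def prOf {Sig : Type*} [Fintype Sig] {n : ℕ} (μ : Sig → ℝ)
    (A : Set (Fin n → Sig)) : ℝ :=
  ∑ x : Fin n → Sig, if x ∈ A then ∏ i, μ (x i) else 0

open Classical in
/-- The conditional distribution `μ^{⊗n} | A` evaluated at `x`. -/
noncomputable def condDist {Sig : Type*} [Fintype Sig] {n : ℕ} (μ : Sig → ℝ)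
    (A : Set (Fin n → Sig)) (x : Fin n → Sig) : ℝ :=
  (if x ∈ A then ∏ i, μ (x i) else 0) / prOf μ A

private lemma prOf_nonneg {Sig : Type*} [Fintype Sig] {n : ℕ} {μ : Sig → ℝ}
    (hμ : ∀ s, 0 ≤ μ s) (A : Set (Fin n → Sig)) : 0 ≤ prOf μ A := by
  unfold prOf
  refine Finset.sum_nonneg fun x _ => ?_
  split
  · exact Finset.prod_nonneg fun t _ => hμ _
  · exact le_refl 0

private lemma prOf_mono {Sig : Type*} [Fintype Sig] {n : ℕ} {μ : Sig → ℝ}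
    (hμ : ∀ s, 0 ≤ μ s) {A B : Set (Fin n → Sig)} (h : A ⊆ B) :
    prOf μ A ≤ prOf μ B := by
  unfold prOf
  refine Finset.sum_le_sum fun x _ => ?_
  by_cases hx : x ∈ A
  · rw [if_pos hx, if_pos (h hx)]
  · rw [if_neg hx]
    split
    · exact Finset.prod_nonneg fun t _ => hμ _
    · exact le_refl 0

private lemma prOf_slice {Sig : Type*} [Fintype Sig] {n : ℕ} (μ : Sig → ℝ) (i : Fin n)
    (A : Set (Fin n → Sig)) :
    prOf μ A = ∑ s : Sig, prOf μ (A ∩ {y | y i = s}) := by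
  classical
  unfold prOf
  rw [Finset.sum_comm]
  refine Finset.sum_congr rfl fun x _ => ?_
  by_cases hx : x ∈ A
  · simp [Set.mem_inter_iff, hx, Set.mem_setOf_eq, Finset.sum_ite_eq]
  · simp [Set.mem_inter_iff, hx]

private lemma prOf_indep {Sig : Type*} [Fintype Sig] {n : ℕ} (μ : Sig → ℝ)
    (hμ1 : ∑ s, μ s = 1) (i : Fin n) (A : Set (Fin n → Sig))
    (hA : ∀ (x : Fin n → Sig) (s : Sig), Function.update x i s ∈ A ↔ x ∈ A)
    (xt : Sig) :
    prOf μ (A ∩ {y | y i = xt}) = μ xt * prOf μ A := by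
  classical
  set H : Sig → ℝ := fun s => ∑ x : Fin n → Sig,
    if x ∈ A ∧ x i = s then ∏ t ∈ Finset.univ.erase i, μ (x t) else 0 with hHdef
  have hH : ∀ s s', H s = H s' := by
    intro s s'
    have hinv : Function.Involutive
        (fun x : Fin n → Sig => Function.update x i (Equiv.swap s s' (x i))) := by
      intro x
      funext t
      rcases eq_or_ne t i with rfl | ht
      · simp
      · simp [Function.update_of_ne ht]
    simp only [hHdef]
    refine Eq.trans (Finset.sum_congr rfl fun x _ => ?_)
      (Equiv.sum_comp (Function.Involutive.toPerm _ hinv) fun x =>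
        if x ∈ A ∧ x i = s' then ∏ t ∈ Finset.univ.erase i, μ (x t) else 0)
    simp only [Function.Involutive.coe_toPerm]
    have h1 : Function.update x i (Equiv.swap s s' (x i)) ∈ A ↔ x ∈ A := hA x _
    have h2 : (Function.update x i (Equiv.swap s s' (x i))) i = Equiv.swap s s' (x i) :=
      Function.update_self _ _ _
    have h3 : (Equiv.swap s s' (x i) = s') ↔ x i = s := by
      rw [Equiv.apply_eq_iff_eq_symm_apply, Equiv.symm_swap, Equiv.swap_apply_right]
    have h4 : ∏ t ∈ Finset.univ.erase i, μ (Function.update x i (Equiv.swap s s' (x i)) t)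
        = ∏ t ∈ Finset.univ.erase i, μ (x t) := by
      refine Finset.prod_congr rfl fun t ht => ?_
      rw [Function.update_of_ne (Finset.ne_of_mem_erase ht)]
    simp only [h2]
    by_cases hc : x ∈ A ∧ x i = s
    · rw [if_pos hc, if_pos ⟨h1.mpr hc.1, h3.mpr hc.2⟩, h4]
    · rw [if_neg hc, if_neg (fun hc' => hc ⟨h1.mp hc'.1, h3.mp hc'.2⟩)]
  have step1 : prOf μ (A ∩ {y | y i = xt}) = μ xt * H xt := by
    unfold prOf
    rw [hHdef, Finset.mul_sum]
    refine Finset.sum_congr rfl fun x _ => ?_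
    by_cases hx : x ∈ A ∧ x i = xt
    · rw [if_pos (show x ∈ A ∩ {y | y i = xt} from ⟨hx.1, hx.2⟩), if_pos hx,
        ← Finset.mul_prod_erase Finset.univ (fun t => μ (x t)) (Finset.mem_univ i), hx.2]
    · rw [if_neg (fun hm => hx ⟨hm.1, hm.2⟩), if_neg hx, mul_zero]
  have step2 : prOf μ A = H xt := by
    unfold prOf
    have e1 : ∀ x : Fin n → Sig, (if x ∈ A then ∏ t, μ (x t) else 0)
        = ∑ s : Sig, if x ∈ A ∧ x i = s then μ s * ∏ t ∈ Finset.univ.erase i, μ (x t) else 0 := by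
      intro x
      by_cases hx : x ∈ A
      · simp only [hx, true_and, if_true]
        rw [Finset.sum_ite_eq Finset.univ (x i)
          (fun s => μ s * ∏ t ∈ Finset.univ.erase i, μ (x t)), if_pos (Finset.mem_univ _),
          Finset.mul_prod_erase Finset.univ (fun t => μ (x t)) (Finset.mem_univ i)]
      · simp [hx]
    rw [Finset.sum_congr rfl fun x _ => e1 x, Finset.sum_comm]
    have e2 : ∀ s : Sig, (∑ x : Fin n → Sig,
        if x ∈ A ∧ x i = s then μ s * ∏ t ∈ Finset.univ.erase i, μ (x t) else 0)
        = μ s * H s := by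
      intro s
      rw [hHdef, Finset.mul_sum]
      refine Finset.sum_congr rfl fun x _ => ?_
      split <;> simp
    rw [Finset.sum_congr rfl fun s _ => e2 s]
    have e3 : ∀ s : Sig, μ s * H s = μ s * H xt := fun s => by rw [hH s xt]
    rw [Finset.sum_congr rfl fun s _ => e3 s, ← Finset.sum_mul, hμ1, one_mul]
  rw [step1, step2]

private lemma event_update {Sig : Type*} {n : ℕ} (ρ : GenRestr Sig n) (i : Fin n)
    (hnotI : i ∉ ρ.I) (hsing : ∀ j, i ∈ ρ.T j → ρ.T j = {i})
    (x : Fin n → Sig) (s : Sig) :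
    Function.update x i s ∈ ρ.event ↔ x ∈ ρ.event := by
  have key : ∀ (x y : Fin n → Sig), (∀ t, t ≠ i → x t = y t) → x ∈ ρ.event → y ∈ ρ.event := by
    rintro x y hxy ⟨h1, h2⟩
    refine ⟨fun j t ht t' ht' => ?_, fun t ht => ?_⟩
    · by_cases hij : i ∈ ρ.T j
      · have hTj := hsing j hij
        rw [hTj, Finset.mem_singleton] at ht ht'
        rw [ht, ht']
      · have hti : t ≠ i := fun h => hij (h ▸ ht)
        have ht'i : t' ≠ i := fun h => hij (h ▸ ht')
        rw [← hxy t hti, ← hxy t' ht'i]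
        exact h1 j t ht t' ht'
    · have hti : t ≠ i := fun h => hnotI (h ▸ ht)
      rw [← hxy t hti]
      exact h2 t ht
  constructor
  · intro h
    exact key _ _ (fun t ht => Function.update_of_ne ht s x) h
  · intro h
    exact key _ _ (fun t ht => (Function.update_of_ne ht s x).symm) h

private lemma chisq {Sig : Type*} [Fintype Sig] (Q N : Sig → ℝ) (hQ0 : ∀ s, 0 ≤ Q s)
    (hQ1 : ∑ s, Q s = 1) (hNQ : ∀ s, Q s = 0 → N s = 0) (S : ℝ) (hS : S = ∑ s, N s) :
    S ^ 2 + (∑ s, |N s - S * Q s|) ^ 2 ≤ ∑ s, (N s) ^ 2 / Q s := by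
  classical
  have key : ∑ s, (N s - S * Q s) ^ 2 / Q s = (∑ s, (N s) ^ 2 / Q s) - S ^ 2 := by
    have h1 : ∀ s, (N s - S * Q s) ^ 2 / Q s
        = (N s) ^ 2 / Q s - 2 * S * N s + S ^ 2 * Q s := by
      intro s
      rcases eq_or_ne (Q s) 0 with h | h
      · simp [h, hNQ s h]
      · field_simp
        ring
    rw [Finset.sum_congr rfl fun s _ => h1 s, Finset.sum_add_distrib, Finset.sum_sub_distrib,
      ← Finset.mul_sum, ← Finset.mul_sum, ← hS, hQ1]
    ring
  have cs : (∑ s, |N s - S * Q s|) ^ 2 ≤ ∑ s, (N s - S * Q s) ^ 2 / Q s := by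
    have hCS := Finset.sum_mul_sq_le_sq_mul_sq Finset.univ
      (fun s => |N s - S * Q s| / Real.sqrt (Q s)) (fun s => Real.sqrt (Q s))
    have e1 : ∀ s : Sig, |N s - S * Q s| / Real.sqrt (Q s) * Real.sqrt (Q s)
        = |N s - S * Q s| := by
      intro s
      rcases eq_or_ne (Q s) 0 with h | h
      · simp [h, hNQ s h]
      · rw [div_mul_cancel₀]
        exact Real.sqrt_ne_zero'.mpr (lt_of_le_of_ne (hQ0 s) (Ne.symm h))
    have e2 : ∀ s : Sig, (|N s - S * Q s| / Real.sqrt (Q s)) ^ 2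
        = (N s - S * Q s) ^ 2 / Q s := by
      intro s
      rw [div_pow, sq_abs, Real.sq_sqrt (hQ0 s)]
    have e3 : ∑ s : Sig, (Real.sqrt (Q s)) ^ 2 = 1 := by
      rw [Finset.sum_congr rfl fun s _ => Real.sq_sqrt (hQ0 s), hQ1]
    rw [Finset.sum_congr rfl fun s _ => e1 s, Finset.sum_congr rfl fun s _ => e2 s, e3,
      mul_one] at hCS
    exact hCS
  linarith

private lemma per_a {Sig : Type*} [Fintype Sig] (Q N : Sig → ℝ) (hQ0 : ∀ s, 0 ≤ Q s)
    (hQ1 : ∑ s, Q s = 1) (hN0 : ∀ s, 0 ≤ N s) (Pρ S : ℝ) (hPρ0 : 0 ≤ Pρ)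
    (hNle : ∀ s, N s ≤ Q s * Pρ) (hS : S = ∑ s, N s) :
    (S / Pρ) ^ 2 + (S / Pρ * ∑ s, |N s / S - Q s|) ^ 2
      ≤ ∑ s, Q s * (N s / (Q s * Pρ)) ^ 2 := by
  rcases eq_or_lt_of_le hPρ0 with hP | hP
  · simp [← hP]
  have hS0' : (0:ℝ) ≤ S := hS ▸ Finset.sum_nonneg fun s _ => hN0 s
  rcases eq_or_lt_of_le hS0' with hS0 | hS0
  · rw [← hS0]
    simp only [zero_div, ne_eq, OfNat.ofNat_ne_zero, not_false_eq_true, zero_pow, zero_mul,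
      add_zero]
    refine Finset.sum_nonneg fun s _ => mul_nonneg (hQ0 s) (sq_nonneg _)
  · have hNQ : ∀ s, Q s = 0 → N s = 0 := fun s h =>
      le_antisymm (by simpa [h] using hNle s) (hN0 s)
    have habs : ∀ s, |N s / S - Q s| = |N s - S * Q s| / S := by
      intro s
      rw [show N s / S - Q s = (N s - S * Q s) / S by field_simp, abs_div, abs_of_pos hS0]
    have hsum : S / Pρ * ∑ s, |N s / S - Q s| = (∑ s, |N s - S * Q s|) / Pρ := by
      rw [Finset.sum_congr rfl fun s _ => habs s, ← Finset.sum_div]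
      field_simp
    have hterm : ∀ s, Q s * (N s / (Q s * Pρ)) ^ 2 = (N s) ^ 2 / Q s / Pρ ^ 2 := by
      intro s
      rcases eq_or_ne (Q s) 0 with h | h
      · simp [h, hNQ s h]
      · field_simp
    rw [hsum, Finset.sum_congr rfl fun s _ => hterm s, ← Finset.sum_div, div_pow, div_pow,
      ← add_div]
    exact (div_le_div_iff_of_pos_right (by positivity)).mpr
      (chisq Q N hQ0 hQ1 hNQ S hS)

private lemma condDist_mix {Sig : Type*} [Fintype Sig] {n : ℕ} (μ : Sig → ℝ)
    (hμ1 : ∑ s, μ s = 1) (i : Fin n) (A : Set (Fin n → Sig))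
    (hA : ∀ (x : Fin n → Sig) (s : Sig), Function.update x i s ∈ A ↔ x ∈ A)
    (x : Fin n → Sig) :
    ∑ xt, μ xt * condDist μ (A ∩ {y | y i = xt}) x = condDist μ A x := by
  classical
  unfold condDist
  have hpr : ∀ xt, prOf μ (A ∩ {y | y i = xt}) = μ xt * prOf μ A :=
    prOf_indep μ hμ1 i A hA
  by_cases hx : x ∈ A
  · rw [Finset.sum_eq_single (x i)]
    · rw [hpr, if_pos (show x ∈ A ∩ {y | y i = x i} from ⟨hx, rfl⟩), if_pos hx]
      rcases eq_or_ne (μ (x i)) 0 with h | h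
      · rw [show (∏ t, μ (x t)) = 0 from Finset.prod_eq_zero (Finset.mem_univ i) h]
        rw [zero_div, mul_zero, zero_div]
      · rw [← mul_div_assoc, mul_div_mul_left _ _ h]
    · intro b _ hb
      rw [if_neg (fun hm : x ∈ A ∩ {y | y i = b} => hb (hm.2.symm)), zero_div, mul_zero]
    · intro h
      exact absurd (Finset.mem_univ _) h
  · rw [if_neg hx, zero_div]
    refine Finset.sum_eq_zero fun xt _ => ?_
    rw [if_neg (fun hm : x ∈ A ∩ {y | y i = xt} => hx hm.1), zero_div, mul_zero]

private lemma cs_w {ι : Type*} [Fintype ι] (w f : ι → ℝ) (hw0 : ∀ a, 0 ≤ w a)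
    (hw1 : ∑ a, w a = 1) : (∑ a, w a * f a) ^ 2 ≤ ∑ a, w a * f a ^ 2 := by
  have hCS := Finset.sum_mul_sq_le_sq_mul_sq Finset.univ
    (fun a => Real.sqrt (w a)) (fun a => Real.sqrt (w a) * f a)
  have e1 : ∀ a : ι, Real.sqrt (w a) * (Real.sqrt (w a) * f a) = w a * f a := by
    intro a; rw [← mul_assoc, Real.mul_self_sqrt (hw0 a)]
  have e2 : ∀ a : ι, (Real.sqrt (w a)) ^ 2 = w a := fun a => Real.sq_sqrt (hw0 a)
  have e3 : ∀ a : ι, (Real.sqrt (w a) * f a) ^ 2 = w a * f a ^ 2 := by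
    intro a; rw [mul_pow, e2]
  rw [Finset.sum_congr rfl fun a _ => e1 a, Finset.sum_congr rfl fun a _ => e3 a] at hCS
  calc (∑ a, w a * f a) ^ 2 ≤ (∑ a, (Real.sqrt (w a)) ^ 2) * ∑ a, w a * f a ^ 2 := hCS
    _ = ∑ a, w a * f a ^ 2 := by
        rw [Finset.sum_congr rfl fun a _ => e2 a, hw1, one_mul]

private lemma arith_aux (α ε β : ℝ) (hα0 : 0 < α) (hε0 : 0 ≤ ε) (hβ0 : 0 < β)
    (hβ1 : β ≤ 1) :
    α ^ 2 * (1 + β ^ 2) - 6 * ε * α ≤ (α - ε) ^ 2 + β ^ 2 * (α - ε) ^ 2 := by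
  have hb2 : β ^ 2 ≤ 1 := by nlinarith
  have h10 : 0 ≤ ε * α * (1 - β ^ 2) := mul_nonneg (mul_nonneg hε0 hα0.le) (by linarith)
  nlinarith [sq_nonneg ε, mul_nonneg hε0 hα0.le, sq_nonneg (ε * β)]

set_option maxHeartbeats 1000000 in
/-- ℓ² energy increment: In the repeated-game setting (`X ∼ Q^{⊗n}` over
`𝒳^{⊗n}` with `𝒳 = ∏ⱼ 𝒳ʲ`), let `E = E¹ × ⋯ × E^k` be a product event with
`α := Pr[E] > 0`.  Let `𝓡ᵢ` (given by weights `w` on restrictions `R a`) be an `(m, ε)`-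
generalized random restriction acting only on the coordinates `[n] \ {i}` (coordinate `i`
lies in a singleton class), with `ε < α`, and suppose that on average over
`ρ ∼ 𝓡ᵢ|E` the conditional marginal of `Xᵢ` is `β`-far from `Q` in `ℓ¹`.  Let `𝓡` sample
`ρ ∼ 𝓡ᵢ`, `x̃ ∼ Q` and additionally fix coordinate `i` to `x̃`.  Then `𝓡` is an `(m, ε)`-
generalized random restriction on `𝒳^{⊗n}` (each outcome has at least `m` free
coordinates, and the average conditional distribution is `ε`-close to `Q^{⊗n}`), and
`𝔼_{ρ' ∼ 𝓡}[Pr[E|E_{ρ'}]²] ≥ α²(1 + β² - 6ε/α)`. -/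
theorem energy_increment_of_skewed_marginal
    {k n : ℕ} {XX : Fin k → Type*} [∀ j, Fintype (XX j)]
    (Q : (∀ j, XX j) → ℝ) (hQ0 : ∀ x, 0 ≤ Q x) (hQ1 : ∑ x, Q x = 1)
    (i : Fin n)
    (Ej : ∀ j, Set (Fin n → XX j))
    (E : Set (Fin n → ∀ j, XX j))
    (hEdef : E = {x | ∀ j, (fun t => x t j) ∈ Ej j})
    (α : ℝ) (hα : α = prOf Q E) (hα0 : 0 < α)
    {ι : Type*} [Fintype ι] (w : ι → ℝ) (hw0 : ∀ a, 0 ≤ w a) (hw1 : ∑ a, w a = 1)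
    (R : ι → GenRestr (∀ j, XX j) n) (m : ℕ) (ε β : ℝ)
    (hnotI : ∀ a, i ∉ (R a).I)
    (hsing : ∀ a j, i ∈ (R a).T j → (R a).T j = {i})
    (hfree : ∀ a, m + 1 ≤ (R a).m)
    (hR : ∑ x : Fin n → ∀ j, XX j,
        |∑ a, w a * condDist Q (R a).event x - ∏ t, Q (x t)| ≤ ε)
    (hε0 : 0 ≤ ε) (hεα : ε < α) (hβ0 : 0 < β) (hβ1 : β ≤ 1)
    (D : ℝ)
    (hD : D = ∑ a, w a * (prOf Q (E ∩ (R a).event) / prOf Q ((R a).event)))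
    (hskew : β ≤ ∑ a,
        (w a * (prOf Q (E ∩ (R a).event) / prOf Q ((R a).event)) / D) *
          ∑ xt : ∀ j, XX j,
            |prOf Q (E ∩ (R a).event ∩ {x | x i = xt}) / prOf Q (E ∩ (R a).event)
              - Q xt|) :
    (∀ a : ι, m ≤ (R a).m - 1) ∧
    (∑ x : Fin n → ∀ j, XX j,
        |(∑ a, w a * ∑ xt : ∀ j, XX j,
            Q xt * condDist Q ((R a).event ∩ {y | y i = xt}) x)
          - ∏ t, Q (x t)| ≤ ε) ∧
    α ^ 2 * (1 + β ^ 2 - 6 * ε / α)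
      ≤ ∑ a, w a * ∑ xt : ∀ j, XX j,
          Q xt * (prOf Q (E ∩ (R a).event ∩ {y | y i = xt})
              / prOf Q ((R a).event ∩ {y | y i = xt})) ^ 2 := by
  classical
  have hupd : ∀ (a : ι) (x : Fin n → ∀ j, XX j) (s : ∀ j, XX j),
      Function.update x i s ∈ (R a).event ↔ x ∈ (R a).event :=
    fun a => event_update (R a) i (hnotI a) (hsing a)
  -- the average conditional probability D is ε-close to α
  have e1 : ∀ a : ι, (∑ x : Fin n → ∀ j, XX j,
      if x ∈ E then w a * condDist Q (R a).event x else 0)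
      = w a * (prOf Q (E ∩ (R a).event) / prOf Q ((R a).event)) := by
    intro a
    unfold condDist prOf
    rw [Finset.sum_div, Finset.mul_sum]
    refine Finset.sum_congr rfl fun x _ => ?_
    by_cases h1 : x ∈ E <;> by_cases h2 : x ∈ (R a).event <;>
      simp [h1, h2, Set.mem_inter_iff]
  have e2 : (∑ x : Fin n → ∀ j, XX j, if x ∈ E then ∏ t, Q (x t) else 0) = α := by
    rw [hα]; rfl
  have hform : D - α = ∑ x : Fin n → ∀ j, XX j,
      (if x ∈ E then ((∑ a, w a * condDist Q (R a).event x) - ∏ t, Q (x t)) else 0) := by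
    have hsplit : ∀ x : Fin n → ∀ j, XX j,
        (if x ∈ E then ((∑ a, w a * condDist Q (R a).event x) - ∏ t, Q (x t)) else 0)
        = (∑ a, if x ∈ E then w a * condDist Q (R a).event x else 0)
          - (if x ∈ E then ∏ t, Q (x t) else 0) := by
      intro x
      by_cases h : x ∈ E <;> simp [h]
    rw [Finset.sum_congr rfl fun x _ => hsplit x, Finset.sum_sub_distrib, e2, Finset.sum_comm,
      Finset.sum_congr rfl fun a _ => e1 a, ← hD]
  have hDa : |D - α| ≤ ε := by
    rw [hform]
    refine le_trans (Finset.abs_sum_le_sum_abs _ _)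
      (le_trans (Finset.sum_le_sum fun x _ => ?_) hR)
    by_cases h : x ∈ E
    · rw [if_pos h]
    · rw [if_neg h, abs_zero]
      exact abs_nonneg _
  have hD0 : 0 < D := by
    have := (abs_le.mp hDa).1
    linarith
  refine ⟨fun a => by have := hfree a; omega, ?_, ?_⟩
  · -- second conjunct
    have hmix : ∀ x : Fin n → ∀ j, XX j,
        (∑ a, w a * ∑ xt : ∀ j, XX j,
          Q xt * condDist Q ((R a).event ∩ {y | y i = xt}) x)
        = ∑ a, w a * condDist Q ((R a).event) x :=
      fun x => Finset.sum_congr rfl fun a _ => by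
        rw [condDist_mix Q hQ1 i _ (hupd a) x]
    refine le_trans (le_of_eq (Finset.sum_congr rfl fun x _ => by rw [hmix x])) hR
  · -- third conjunct
    set p : ι → ℝ := fun a => prOf Q (E ∩ (R a).event) / prOf Q ((R a).event) with hp
    set t : ι → ℝ := fun a => ∑ xt : ∀ j, XX j,
      |prOf Q (E ∩ (R a).event ∩ {y | y i = xt}) / prOf Q (E ∩ (R a).event) - Q xt| with ht
    have hper : ∀ a : ι, p a ^ 2 + (p a * t a) ^ 2
        ≤ ∑ xt : ∀ j, XX j, Q xt * (prOf Q (E ∩ (R a).event ∩ {y | y i = xt})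
            / prOf Q ((R a).event ∩ {y | y i = xt})) ^ 2 := by
      intro a
      have h1 : ∀ xt : ∀ j, XX j, prOf Q ((R a).event ∩ {y | y i = xt})
          = Q xt * prOf Q ((R a).event) := prOf_indep Q hQ1 i _ (hupd a)
      have h2 : prOf Q (E ∩ (R a).event)
          = ∑ xt : ∀ j, XX j, prOf Q (E ∩ (R a).event ∩ {y | y i = xt}) :=
        prOf_slice Q i (E ∩ (R a).event)
      have h3 : ∀ xt : ∀ j, XX j, prOf Q (E ∩ (R a).event ∩ {y | y i = xt})
          ≤ Q xt * prOf Q ((R a).event) := fun xt =>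
        le_trans (prOf_mono hQ0 (show E ∩ (R a).event ∩ {y | y i = xt}
          ⊆ (R a).event ∩ {y | y i = xt} from fun y hy => ⟨hy.1.2, hy.2⟩))
          (le_of_eq (h1 xt))
      have h4 := per_a Q (fun xt => prOf Q (E ∩ (R a).event ∩ {y | y i = xt})) hQ0 hQ1
        (fun xt => prOf_nonneg hQ0 _) (prOf Q ((R a).event)) (prOf Q (E ∩ (R a).event))
        (prOf_nonneg hQ0 _) h3 h2
      simp only [hp, ht]
      refine le_trans h4 (le_of_eq (Finset.sum_congr rfl fun xt _ => by rw [h1 xt]))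
    have hDp : D = ∑ a, w a * p a := by
      rw [hD]
    have cs1 : (∑ a, w a * p a) ^ 2 ≤ ∑ a, w a * p a ^ 2 := cs_w w p hw0 hw1
    have cs2 : (∑ a, w a * (p a * t a)) ^ 2 ≤ ∑ a, w a * (p a * t a) ^ 2 :=
      cs_w w (fun a => p a * t a) hw0 hw1
    have hskew' : β * D ≤ ∑ a, w a * (p a * t a) := by
      have hskew2 : β ≤ ∑ a, (w a * p a / D) * t a := by
        simp only [hp, ht]; exact hskew
      have h5 : ∑ a, (w a * p a / D) * t a = (∑ a, w a * (p a * t a)) / D := by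
        rw [Finset.sum_div]
        refine Finset.sum_congr rfl fun a _ => ?_
        rw [div_mul_eq_mul_div, mul_assoc]
      rw [h5] at hskew2
      exact (le_div_iff₀ hD0).mp hskew2
    have sq2 : (β * D) ^ 2 ≤ (∑ a, w a * (p a * t a)) ^ 2 :=
      pow_le_pow_left₀ (mul_nonneg hβ0.le hD0.le) hskew' 2
    have expand : ∑ a, w a * (p a ^ 2 + (p a * t a) ^ 2)
        = (∑ a, w a * p a ^ 2) + ∑ a, w a * (p a * t a) ^ 2 := by
      rw [← Finset.sum_add_distrib]
      exact Finset.sum_congr rfl fun a _ => by ring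
    have hfinal : α ^ 2 * (1 + β ^ 2 - 6 * ε / α)
        ≤ ∑ a, w a * (p a ^ 2 + (p a * t a) ^ 2) := by
      rw [expand]
      have hαε : α - ε ≤ D := by linarith [(abs_le.mp hDa).1]
      have h7 : (α - ε) ^ 2 ≤ D ^ 2 := pow_le_pow_left₀ (by linarith) hαε 2
      have h8 : β ^ 2 * (α - ε) ^ 2 ≤ β ^ 2 * D ^ 2 :=
        mul_le_mul_of_nonneg_left h7 (sq_nonneg β)
      have hfrac : α ^ 2 * (1 + β ^ 2 - 6 * ε / α)
          = α ^ 2 * (1 + β ^ 2) - 6 * ε * α := by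
        field_simp
      rw [hfrac]
      have hDb : D ^ 2 ≤ ∑ a, w a * p a ^ 2 := by rw [← hDp] at cs1; exact cs1
      have hDt : β ^ 2 * D ^ 2 ≤ ∑ a, w a * (p a * t a) ^ 2 := by
        calc β ^ 2 * D ^ 2 = (β * D) ^ 2 := by ring
          _ ≤ (∑ a, w a * (p a * t a)) ^ 2 := sq2
          _ ≤ ∑ a, w a * (p a * t a) ^ 2 := cs2
      linarith [arith_aux α ε β hα0 hε0 hβ0 hβ1, le_trans h7 hDb, le_trans h8 hDt]
    refine le_trans hfinal (Finset.sum_le_sum fun a _ => ?_)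
    exact mul_le_mul_of_nonneg_left (hper a) (hw0 a)
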